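/- There exists a subset S of Σ₂ which is dense in Σ₂, uncountable, invariant under the shift map σ (i.e. σ(S) ⊆ S), consists entirely of transitive points of σ, and is a 1-scrambled set for σ: for all x ≠ y in S, limsup_{n→∞} d(σⁿ(x), σⁿ(y)) = 1 and liminf_{n→∞} d(σⁿ(x), σⁿ(y)) = 0, and for every x ∈ S and every periodic point p of σ, limsup_{n→∞} d(σⁿ(x), σⁿ(p)) ≥ 1/2. -/

import Mathlib

open Filter

/-- The shift map on the space `Σ₂` of binary sequences. -/
def shift (β : ℕ → Bool) : ℕ → Bool := fun i => β (i + 1)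

/-- The metric `d(β,γ) = ∑ᵢ |βᵢ - γᵢ| / 2^(i+1)` on `Σ₂`. -/
noncomputable def d2 (β γ : ℕ → Bool) : ℝ :=
  ∑' i : ℕ, |(if β i then (1 : ℝ) else 0) - (if γ i then (1 : ℝ) else 0)| / 2 ^ (i + 1)

/-- A set is dense in `Σ₂` (with respect to the metric `d2`). -/
def Dense2 (Y : Set (ℕ → Bool)) : Prop :=
  ∀ β : ℕ → Bool, ∀ ε : ℝ, 0 < ε → ∃ y ∈ Y, d2 β y < ε

namespace Scr

/-! ### Basic facts about the metric `d2` -/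

lemma geom_eq (a : ℝ) : (fun i : ℕ => a / 2 ^ (i+1)) = fun i : ℕ => a / 2 / 2 ^ i := by
  funext i; rw [pow_succ]; ring

lemma summable_geom (a : ℝ) : Summable (fun i : ℕ => a / 2 ^ (i+1)) := by
  rw [geom_eq]; exact (summable_geometric_two).mul_left (a/2) |>.congr (fun i => by simp only [one_div, inv_pow]; ring)

lemma tsum_geom (a : ℝ) : ∑' i : ℕ, a / 2 ^ (i+1) = a := by
  rw [geom_eq]; exact tsum_geometric_two' a

noncomputable def term (β γ : ℕ → Bool) (i : ℕ) : ℝ :=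
  |(if β i then (1 : ℝ) else 0) - (if γ i then (1 : ℝ) else 0)| / 2 ^ (i + 1)

lemma term_eq (β γ : ℕ → Bool) (i : ℕ) :
    term β γ i = if β i = γ i then 0 else 1 / 2 ^ (i + 1) := by
  unfold term
  cases hβ : β i <;> cases hγ : γ i <;> norm_num

lemma term_nonneg (β γ : ℕ → Bool) (i : ℕ) : 0 ≤ term β γ i := by
  rw [term_eq]; split
  · exact le_refl 0
  · positivity

lemma term_le (β γ : ℕ → Bool) (i : ℕ) : term β γ i ≤ 1 / 2 ^ (i + 1) := by
  rw [term_eq]; split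
  · positivity
  · exact le_refl _

lemma summable_term (β γ : ℕ → Bool) : Summable (term β γ) :=
  Summable.of_nonneg_of_le (term_nonneg β γ) (term_le β γ) (summable_geom 1)

lemma d2_eq (β γ : ℕ → Bool) : d2 β γ = ∑' i, term β γ i := rfl

lemma d2_nonneg (β γ : ℕ → Bool) : 0 ≤ d2 β γ :=
  tsum_nonneg (term_nonneg β γ)

lemma d2_le_one (β γ : ℕ → Bool) : d2 β γ ≤ 1 := by
  rw [d2_eq]
  calc ∑' i, term β γ i ≤ ∑' i, (1:ℝ) / 2 ^ (i+1) :=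
        Summable.tsum_le_tsum (term_le β γ) (summable_term β γ) (summable_geom 1)
    _ = 1 := tsum_geom 1

lemma sum_geom (L : ℕ) : (∑ i ∈ Finset.range L, (1:ℝ) / 2 ^ (i+1)) = 1 - (1/2)^L := by
  induction L with
  | zero => simp
  | succ L ih => rw [Finset.sum_range_succ, ih]; simp only [one_div, inv_pow]; ring

lemma d2_ge_of_prefix_ne {β γ : ℕ → Bool} (L : ℕ) (h : ∀ i < L, β i ≠ γ i) :
    1 - (1/2)^L ≤ d2 β γ := by
  rw [d2_eq, ← sum_geom L]
  have : (∑ i ∈ Finset.range L, (1:ℝ)/2^(i+1)) = ∑ i ∈ Finset.range L, term β γ i := by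
    refine Finset.sum_congr rfl (fun i hi => ?_)
    rw [term_eq, if_neg (h i (Finset.mem_range.1 hi))]
  rw [this]
  exact Summable.sum_le_tsum _ (fun i _ => term_nonneg β γ i) (summable_term β γ)

lemma d2_le_of_prefix_eq {β γ : ℕ → Bool} (L : ℕ) (h : ∀ i < L, β i = γ i) :
    d2 β γ ≤ (1/2)^L := by
  rw [d2_eq]
  have h0 : ∀ i ∈ Finset.range L, term β γ i = 0 := by
    intro i hi; rw [term_eq, if_pos (h i (Finset.mem_range.1 hi))]
  rw [← Summable.sum_add_tsum_nat_add L (summable_term β γ), Finset.sum_eq_zero h0, zero_add]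
  have key : ∀ i : ℕ, term β γ (i + L) ≤ ((1:ℝ)/2^L) / 2 ^ (i+1) := by
    intro i
    refine (term_le β γ (i + L)).trans (le_of_eq ?_)
    rw [div_div, one_div, one_div, pow_add]
    ring_nf
  calc ∑' i, term β γ (i + L) ≤ ∑' i, ((1:ℝ)/2^L) / 2 ^ (i+1) :=
        Summable.tsum_le_tsum key ((summable_term β γ).comp_injective (add_left_injective L))
          (summable_geom _)
    _ = 1/2^L := tsum_geom _
    _ = (1/2)^L := by rw [div_pow, one_pow]

lemma d2_ge_half {β γ : ℕ → Bool} (h : β 0 ≠ γ 0) : 1/2 ≤ d2 β γ := by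
  rw [d2_eq]
  have h0 : term β γ 0 = 1/2 := by rw [term_eq, if_neg h]; norm_num
  calc (1:ℝ)/2 = term β γ 0 := h0.symm
    _ ≤ ∑' i, term β γ i := Summable.le_tsum (summable_term β γ) 0 (fun i _ => term_nonneg β γ i)

/-! ### limsup / liminf helpers -/

lemma limsup_eq_one (f : ℕ → ℝ) (h0 : ∀ n, 0 ≤ f n) (h1 : ∀ n, f n ≤ 1)
    (h : ∀ L : ℕ, ∃ᶠ n in atTop, 1 - (1/2)^L ≤ f n) : limsup f atTop = 1 := by
  have hb : IsBoundedUnder (· ≤ ·) atTop f := isBoundedUnder_of ⟨1, h1⟩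
  have hc : IsCoboundedUnder (· ≤ ·) atTop f :=
    IsCoboundedUnder.of_frequently_ge (Frequently.of_forall h0)
  refine le_antisymm (limsup_le_of_le hc (Eventually.of_forall h1)) ?_
  by_contra hlt
  push_neg at hlt
  obtain ⟨L, hL⟩ := exists_pow_lt_of_lt_one (sub_pos.2 hlt) (by norm_num : (1:ℝ)/2 < 1)
  have := le_limsup_of_frequently_le (h L) hb
  linarith

lemma liminf_eq_zero (f : ℕ → ℝ) (h0 : ∀ n, 0 ≤ f n) (h1 : ∀ n, f n ≤ 1)
    (h : ∀ L : ℕ, ∃ᶠ n in atTop, f n ≤ (1/2)^L) : liminf f atTop = 0 := by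
  have hb : IsBoundedUnder (· ≥ ·) atTop f := isBoundedUnder_of ⟨0, h0⟩
  have hc : IsCoboundedUnder (· ≥ ·) atTop f :=
    IsCoboundedUnder.of_frequently_le (Frequently.of_forall h1)
  refine le_antisymm ?_ (le_liminf_of_le hc (Eventually.of_forall h0))
  by_contra hlt
  push_neg at hlt
  obtain ⟨L, hL⟩ := exists_pow_lt_of_lt_one hlt (by norm_num : (1:ℝ)/2 < 1)
  have := liminf_le_of_frequently_le (h L) hb
  linarith

lemma half_le_limsup (f : ℕ → ℝ) (h1 : ∀ n, f n ≤ 1)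
    (h : ∃ᶠ n in atTop, 1/2 ≤ f n) : 1/2 ≤ limsup f atTop :=
  le_limsup_of_frequently_le h (isBoundedUnder_of ⟨1, h1⟩)

/-! ### The construction -/

/-- decode a bit-word from a natural number -/
def dec (r i : ℕ) : Bool := (r / 2^i) % 2 == 1

/-- encode the first `L` bits of `β` -/
def code (β : ℕ → Bool) : ℕ → ℕ
  | 0 => 0
  | L+1 => 2 * code (fun i => β (i+1)) L + (if β 0 then 1 else 0)

lemma dec_code : ∀ (L : ℕ) (β : ℕ → Bool) (i : ℕ), i < L → dec (code β L) i = β i := by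
  intro L
  induction L with
  | zero => intro β i hi; omega
  | succ L ih =>
    intro β i hi
    cases i with
    | zero =>
      unfold dec code
      cases hβ : β 0 <;> simp [Nat.mul_add_mod, hβ]
    | succ i =>
      have hc : code β (L+1) = 2 * code (fun i => β (i+1)) L + (if β 0 then 1 else 0) := rfl
      have h2 : code β (L+1) / 2 = code (fun i => β (i+1)) L := by
        rw [hc]; split <;> omega
      have : dec (code β (L+1)) (i+1) = dec (code β (L+1) / 2) i := by
        unfold dec; rw [pow_succ, Nat.div_div_eq_div_mul]
        ring_nf
      rw [this, h2, ih (fun i => β (i+1)) i (by omega)]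

/-- content of block `s` at offset `i`, for the point indexed by `t` -/
def cell (t : ℕ → Bool) (s i : ℕ) : Bool :=
  if s % 4 = 0 then dec (Nat.unpair (s/4)).2 i
  else if s % 4 = 1 then false
  else if s % 4 = 2 then ((i / ((Nat.unpair (s/4)).1 + 1)) % 2 == 1)
  else t (Nat.unpair (s/4)).1

/-- triangular numbers: start of block `s` -/
def T : ℕ → ℕ
  | 0 => 0
  | s+1 => T s + s + 1

def decode : ℕ → ℕ × ℕ
  | 0 => (0, 0)
  | n+1 => if (decode n).2 < (decode n).1 then ((decode n).1, (decode n).2 + 1)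
           else ((decode n).1 + 1, 0)

/-- the point of `Σ₂` indexed by `t` -/
def pt (t : ℕ → Bool) (n : ℕ) : Bool := cell t (decode n).1 (decode n).2

lemma decode_T : ∀ s : ℕ, ∀ i ≤ s, decode (T s + i) = (s, i) := by
  intro s
  induction s with
  | zero => intro i hi; interval_cases i; simp [T, decode]
  | succ s ih =>
    have base : decode (T (s+1)) = (s+1, 0) := by
      have : T (s+1) = (T s + s) + 1 := rfl
      rw [this, decode, ih s le_rfl]
      simp
    intro i hi
    induction i with
    | zero => exact base
    | succ i ihi =>
      have h1 : decode (T (s+1) + i) = (s+1, i) := ihi (by omega)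
      have : T (s+1) + (i+1) = (T (s+1) + i) + 1 := by omega
      rw [this, decode, h1]
      simp only
      rw [if_pos (by omega)]

lemma pt_eval (t : ℕ → Bool) {s i : ℕ} (h : i ≤ s) : pt t (T s + i) = cell t s i := by
  unfold pt; rw [decode_T s i h]

lemma T_ge (s : ℕ) : s ≤ T s := by
  induction s with
  | zero => simp [T]
  | succ s ih =>
    have : T (s+1) = T s + s + 1 := rfl
    omega

lemma cell_zero (t : ℕ → Bool) {s : ℕ} (h : s % 4 = 0) (i : ℕ) :
    cell t s i = dec (Nat.unpair (s/4)).2 i := by unfold cell; rw [if_pos h]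

lemma cell_one (t : ℕ → Bool) {s : ℕ} (h : s % 4 = 1) (i : ℕ) : cell t s i = false := by
  unfold cell; rw [if_neg (by omega), if_pos h]

lemma cell_two (t : ℕ → Bool) {s : ℕ} (h : s % 4 = 2) (i : ℕ) :
    cell t s i = ((i / ((Nat.unpair (s/4)).1 + 1)) % 2 == 1) := by
  unfold cell; rw [if_neg (by omega), if_neg (by omega), if_pos h]

lemma cell_three (t : ℕ → Bool) {s : ℕ} (h : s % 4 = 3) (i : ℕ) :
    cell t s i = t (Nat.unpair (s/4)).1 := by
  unfold cell; rw [if_neg (by omega), if_neg (by omega), if_neg (by omega)]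

lemma shift_iter : ∀ (n : ℕ) (β : ℕ → Bool) (i : ℕ), (shift^[n] β) i = β (i + n) := by
  intro n
  induction n with
  | zero => intro β i; simp
  | succ n ih =>
    intro β i
    rw [Function.iterate_succ_apply, ih (shift β) i]
    unfold shift
    congr 1

lemma orbit_apply (t : ℕ → Bool) (a n i : ℕ) :
    shift^[n] (shift^[a] (pt t)) i = pt t (i + (n + a)) := by
  rw [shift_iter, shift_iter]
  congr 1
  omega

/-! ### Frequently-lemmas about the construction -/

lemma parity_ne (m : ℕ) : ((m % 2 == 1) : Bool) ≠ (((m+1) % 2 == 1) : Bool) := by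
  rcases Nat.mod_two_eq_zero_or_one m with h | h
  · have h' : (m+1) % 2 = 1 := by omega
    rw [h, h']; decide
  · have h' : (m+1) % 2 = 0 := by omega
    rw [h, h']; decide

/-- frequent total disagreement windows between `pt t` at offset `a` and `pt t'` at
offset `a + j`. -/
lemma freq_ne (t t' : ℕ → Bool) (a j L : ℕ)
    (h : (0 < j ∧ t = t') ∨ ∃ u, t u ≠ t' u) :
    ∃ᶠ n in atTop, ∀ i < L, pt t (i + (n + a)) ≠ pt t' (i + (n + (a + j))) := by
  rw [frequently_atTop]
  intro N
  rcases h with ⟨hj, rfl⟩ | ⟨u, hu⟩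
  · -- type 2 block with pattern period j
    set v := N + a + L + j with hv
    set s := 4 * Nat.pair (j-1) v + 2 with hs
    have hs4 : s % 4 = 2 := by omega
    have hsd : s / 4 = Nat.pair (j-1) v := by omega
    have hpv : v ≤ Nat.pair (j-1) v := Nat.right_le_pair _ _
    have hss : v ≤ s := by omega
    have hTs : s ≤ T s := T_ge s
    have ha : a ≤ T s := by omega
    refine ⟨T s - a, by omega, ?_⟩
    intro i hi
    have h1 : i + (T s - a + a) = T s + i := by omega
    have h2 : i + (T s - a + (a + j)) = T s + (i + j) := by omega
    rw [h1, h2, pt_eval t (by omega), pt_eval t (by omega), cell_two t hs4, cell_two t hs4,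
      hsd, Nat.unpair_pair]
    simp only
    have hj1 : (j - 1) + 1 = j := by omega
    rw [hj1, Nat.add_div_right i hj]
    exact parity_ne (i / j)
  · -- type 3 block with constant value t u resp. t' u
    set v := N + a + L + j with hv
    set s := 4 * Nat.pair u v + 3 with hs
    have hs4 : s % 4 = 3 := by omega
    have hsd : s / 4 = Nat.pair u v := by omega
    have hpv : v ≤ Nat.pair u v := Nat.right_le_pair _ _
    have hss : v ≤ s := by omega
    have hTs : s ≤ T s := T_ge s
    have ha : a ≤ T s := by omega
    refine ⟨T s - a, by omega, ?_⟩
    intro i hi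
    have h1 : i + (T s - a + a) = T s + i := by omega
    have h2 : i + (T s - a + (a + j)) = T s + (i + j) := by omega
    rw [h1, h2, pt_eval t (by omega), pt_eval t' (by omega), cell_three t hs4, cell_three t' hs4,
      hsd, Nat.unpair_pair]
    exact hu

/-- frequent total agreement windows. -/
lemma freq_eq (t t' : ℕ → Bool) (a j L : ℕ) :
    ∃ᶠ n in atTop, ∀ i < L, pt t (i + (n + a)) = pt t' (i + (n + (a + j))) := by
  rw [frequently_atTop]
  intro N
  set v := N + a + L + j with hv
  set s := 4 * Nat.pair 0 v + 1 with hs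
  have hs4 : s % 4 = 1 := by omega
  have hpv : v ≤ Nat.pair 0 v := Nat.right_le_pair _ _
  have hss : v ≤ s := by omega
  have hTs : s ≤ T s := T_ge s
  have ha : a ≤ T s := by omega
  refine ⟨T s - a, by omega, ?_⟩
  intro i hi
  have h1 : i + (T s - a + a) = T s + i := by omega
  have h2 : i + (T s - a + (a + j)) = T s + (i + j) := by omega
  rw [h1, h2, pt_eval t (by omega), pt_eval t' (by omega), cell_one t hs4, cell_one t' hs4]

/-- every finite word occurs in `pt t`, arbitrarily far out. -/
lemma word_occurs (t : ℕ → Bool) (a : ℕ) (β : ℕ → Bool) (L N : ℕ) :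
    ∃ n, N ≤ n ∧ ∀ i < L, pt t (i + (n + a)) = β i := by
  set v := N + a + L with hv
  set s := 4 * Nat.pair v (code β L) with hs
  have hs4 : s % 4 = 0 := by omega
  have hsd : s / 4 = Nat.pair v (code β L) := by omega
  have hpv : v ≤ Nat.pair v (code β L) := Nat.left_le_pair _ _
  have hss : v ≤ s := by omega
  have hTs : s ≤ T s := T_ge s
  have ha : a ≤ T s := by omega
  refine ⟨T s - a, by omega, ?_⟩
  intro i hi
  have h1 : i + (T s - a + a) = T s + i := by omega
  rw [h1, pt_eval t (by omega), cell_zero t hs4, hsd, Nat.unpair_pair]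
  exact dec_code L β i hi

/-- `pt t` takes the value `true` arbitrarily far out. -/
lemma freq_true (t : ℕ → Bool) (a : ℕ) :
    ∃ᶠ n in atTop, pt t (n + a) = true := by
  rw [frequently_atTop]
  intro N
  set v := N + a + 2 with hv
  set s := 4 * Nat.pair 0 v + 2 with hs
  have hs4 : s % 4 = 2 := by omega
  have hsd : s / 4 = Nat.pair 0 v := by omega
  have hpv : v ≤ Nat.pair 0 v := Nat.right_le_pair _ _
  have hss : v ≤ s := by omega
  have hTs : s ≤ T s := T_ge s
  have ha : a + 1 ≤ T s := by omega
  refine ⟨T s + 1 - a, by omega, ?_⟩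
  have h1 : T s + 1 - a + a = T s + 1 := by omega
  rw [h1, pt_eval t (by omega), cell_two t hs4, hsd, Nat.unpair_pair]
  simp

/-- `pt t` takes the value `false` arbitrarily far out, at positions in any
given residue class mod `k`. -/
lemma freq_false_mod (t : ℕ → Bool) (a k n₀ : ℕ) (hk : 0 < k) :
    ∃ᶠ n in atTop, pt t (n + a) = false ∧ n % k = n₀ % k := by
  rw [frequently_atTop]
  intro N
  set v := N + a + n₀ + k with hv
  set s := 4 * Nat.pair 0 v + 1 with hs
  have hs4 : s % 4 = 1 := by omega
  have hpv : v ≤ Nat.pair 0 v := Nat.right_le_pair _ _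
  have hss : v ≤ s := by omega
  have hTs : s ≤ T s := T_ge s
  have ha : a ≤ T s := by omega
  set c := T s - a with hc
  have hdm : k * (c / k) + c % k = c := Nat.div_add_mod c k
  have hml : c % k < k := Nat.mod_lt _ hk
  set q := c / k + 1 with hq
  have hqk : q * k = k * (c / k) + k := by rw [hq]; ring
  set n := n₀ + q * k with hn
  have hnc : c < n ∧ n ≤ n₀ + c + k := by omega
  refine ⟨n, by omega, ?_, ?_⟩
  · have h1 : n + a = T s + (n - c) := by omega
    rw [h1, pt_eval t (by omega), cell_one t hs4]
  · rw [hn]; exact Nat.add_mul_mod_self_right n₀ q k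

lemma pt_injective : Function.Injective pt := by
  intro t t' h
  by_contra hne
  obtain ⟨u, hu⟩ := Function.ne_iff.1 hne
  set s := 4 * Nat.pair u 0 + 3 with hs
  have hs4 : s % 4 = 3 := by omega
  have hsd : s / 4 = Nat.pair u 0 := by omega
  have h1 : pt t (T s + 0) = t u := by
    rw [pt_eval t (by omega), cell_three t hs4, hsd, Nat.unpair_pair]
  have h2 : pt t' (T s + 0) = t' u := by
    rw [pt_eval t' (by omega), cell_three t' hs4, hsd, Nat.unpair_pair]
  rw [h] at h1
  rw [h1] at h2
  exact hu h2

lemma not_countable_fun : ¬ Countable (ℕ → Bool) := by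
  intro hC
  obtain ⟨g, hg⟩ := (countable_iff_exists_injective (ℕ → Bool)).1 hC
  classical
  have hh : Function.Injective (fun (A : Set ℕ) => (fun n => decide (n ∈ A) : ℕ → Bool)) := by
    intro A B hAB
    ext n
    have := congrFun hAB n
    simpa using this
  exact Function.cantor_injective _ (hg.comp hh)

/-- a period of `p` propagates along residue classes. -/
lemma periodic_mod {p : ℕ → Bool} {k : ℕ} (hk : 0 < k)
    (hper : ∀ m, p (m + k) = p m) : ∀ m, p m = p (m % k) := by
  intro m
  induction m using Nat.strong_induction_on with
  | _ m ih =>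
    by_cases h : m < k
    · rw [Nat.mod_eq_of_lt h]
    · have hm : m = (m - k) + k := by omega
      rw [hm, hper, ih (m - k) (by omega)]
      congr 1
      exact (Nat.add_mod_right _ _).symm

end Scr

open Scr in
/-- There exists a dense, uncountable, shift-invariant 1-scrambled set of
transitive points for the shift map on `Σ₂`. -/
theorem shift_has_dense_uncountable_invariant_one_scrambled_set :
    ∃ S : Set (ℕ → Bool),
      Dense2 S ∧
      ¬ S.Countable ∧
      shift '' S ⊆ S ∧
      (∀ x ∈ S, Dense2 (Set.range fun n => shift^[n] x)) ∧
      (∀ x ∈ S, ∀ y ∈ S, x ≠ y →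
        limsup (fun n => d2 (shift^[n] x) (shift^[n] y)) atTop = 1 ∧
        liminf (fun n => d2 (shift^[n] x) (shift^[n] y)) atTop = 0) ∧
      (∀ x ∈ S, ∀ p : ℕ → Bool, (∃ k : ℕ, 0 < k ∧ shift^[k] p = p) →
        (1 : ℝ) / 2 ≤ limsup (fun n => d2 (shift^[n] x) (shift^[n] p)) atTop) := by
  classical
  refine ⟨{x | ∃ a t, shift^[a] (pt t) = x}, ?_, ?_, ?_, ?_, ?_, ?_⟩
  · -- dense
    intro β ε hε
    obtain ⟨L, hL⟩ := exists_pow_lt_of_lt_one hε (by norm_num : (1:ℝ)/2 < 1)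
    obtain ⟨n, -, hmatch⟩ := word_occurs (fun _ => false) 0 β L 0
    refine ⟨shift^[n] (pt (fun _ => false)), ⟨n, fun _ => false, rfl⟩, ?_⟩
    have : d2 β (shift^[n] (pt (fun _ => false))) ≤ (1/2)^L := by
      refine d2_le_of_prefix_eq L (fun i hi => ?_)
      rw [shift_iter]
      have := hmatch i hi
      rw [show i + (n + 0) = i + n by omega] at this
      exact this.symm
    linarith
  · -- uncountable
    intro hC
    have hsub : Set.range pt ⊆ {x | ∃ a t, shift^[a] (pt t) = x} := by
      rintro _ ⟨t, rfl⟩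
      exact ⟨0, t, rfl⟩
    have hrc : (Set.range pt).Countable := hC.mono hsub
    have : Countable (Set.range pt) := hrc.to_subtype
    have : Countable (ℕ → Bool) := Countable.of_equiv _ (Equiv.ofInjective pt pt_injective).symm
    exact not_countable_fun this
  · -- invariant
    rintro x ⟨y, ⟨a, t, rfl⟩, rfl⟩
    exact ⟨a + 1, t, Function.iterate_succ_apply' shift a (pt t)⟩
  · -- transitive points
    rintro x ⟨a, t, rfl⟩ β ε hε
    obtain ⟨L, hL⟩ := exists_pow_lt_of_lt_one hε (by norm_num : (1:ℝ)/2 < 1)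
    obtain ⟨n, -, hmatch⟩ := word_occurs t a β L 0
    refine ⟨shift^[n] (shift^[a] (pt t)), ⟨n, rfl⟩, ?_⟩
    have : d2 β (shift^[n] (shift^[a] (pt t))) ≤ (1/2)^L := by
      refine d2_le_of_prefix_eq L (fun i hi => ?_)
      rw [orbit_apply]
      exact (hmatch i hi).symm
    linarith
  · -- scrambled pairs
    rintro x ⟨a, t, rfl⟩ y ⟨b, t', rfl⟩ hxy
    set f := fun n => d2 (shift^[n] (shift^[a] (pt t))) (shift^[n] (shift^[b] (pt t'))) with hf
    have h0 : ∀ n, 0 ≤ f n := fun n => d2_nonneg _ _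
    have h1 : ∀ n, f n ≤ 1 := fun n => d2_le_one _ _
    -- the disagreement hypothesis for freq_ne, in both orders
    have hcase : (t = t' ∧ a ≠ b) ∨ ∃ u, t u ≠ t' u := by
      by_cases ht : t = t'
      · subst ht
        refine Or.inl ⟨rfl, fun hab => hxy ?_⟩
        rw [hab]
      · exact Or.inr (Function.ne_iff.1 ht)
    constructor
    · refine limsup_eq_one f h0 h1 (fun L => ?_)
      have key : ∃ᶠ n in atTop, ∀ i < L,
          shift^[n] (shift^[a] (pt t)) i ≠ shift^[n] (shift^[b] (pt t')) i := by
        rcases le_or_gt a b with hab | hab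
        · have hj : b = a + (b - a) := by omega
          have hfreq := freq_ne t t' a (b - a) L ?_
          · refine hfreq.mono (fun n hn i hi => ?_)
            rw [orbit_apply, orbit_apply]
            have := hn i hi
            rw [← hj] at this
            exact this
          · rcases hcase with ⟨rfl, hne⟩ | h
            · exact Or.inl ⟨by omega, rfl⟩
            · exact Or.inr h
        · have hj : a = b + (a - b) := by omega
          have hfreq := freq_ne t' t b (a - b) L ?_
          · refine hfreq.mono (fun n hn i hi => ?_)
            rw [orbit_apply, orbit_apply]
            have := hn i hi
            rw [← hj] at this
            exact this.symm
          · rcases hcase with ⟨rfl, hne⟩ | ⟨u, hu⟩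
            · exact Or.inl ⟨by omega, rfl⟩
            · exact Or.inr ⟨u, hu.symm⟩
      exact key.mono (fun n hn => d2_ge_of_prefix_ne L hn)
    · refine liminf_eq_zero f h0 h1 (fun L => ?_)
      have key : ∃ᶠ n in atTop, ∀ i < L,
          shift^[n] (shift^[a] (pt t)) i = shift^[n] (shift^[b] (pt t')) i := by
        rcases le_or_gt a b with hab | hab
        · have hj : b = a + (b - a) := by omega
          refine (freq_eq t t' a (b - a) L).mono (fun n hn i hi => ?_)
          rw [orbit_apply, orbit_apply]
          have := hn i hi
          rw [← hj] at this
          exact this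
        · have hj : a = b + (a - b) := by omega
          refine (freq_eq t' t b (a - b) L).mono (fun n hn i hi => ?_)
          rw [orbit_apply, orbit_apply]
          have := hn i hi
          rw [← hj] at this
          exact this.symm
      exact key.mono (fun n hn => d2_le_of_prefix_eq L hn)
  · -- periodic points are far away infinitely often
    rintro x ⟨a, t, rfl⟩ p ⟨k, hk, hp⟩
    have hper : ∀ m, p (m + k) = p m := by
      intro m
      have := congrFun hp m
      rw [shift_iter] at this
      rw [Nat.add_comm m k] at this ⊢
      exact this
    refine half_le_limsup _ (fun n => d2_le_one _ _) ?_
    by_cases hall : ∀ m, p m = false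
    · refine (freq_true t a).mono (fun n hn => ?_)
      refine d2_ge_half ?_
      rw [orbit_apply, shift_iter]
      rw [show 0 + (n + a) = n + a by omega, hn, hall (0 + n)]
      decide
    · push_neg at hall
      obtain ⟨n₀, hn₀⟩ := hall
      have hn₀' : p n₀ = true := by
        cases h : p n₀
        · exact absurd h hn₀
        · rfl
      refine (freq_false_mod t a k n₀ hk).mono (fun n hn => ?_)
      refine d2_ge_half ?_
      rw [orbit_apply, shift_iter]
      rw [show 0 + (n + a) = n + a by omega, hn.1]
      have : p (0 + n) = true := by
        rw [show 0 + n = n by omega, periodic_mod hk hper n, hn.2, ← periodic_mod hk hper n₀]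
        exact hn₀'
      rw [this]
      decide
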